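/- Let X ∈ ℝ^{n×p} and λ > 0, and let γ̂ ∈ ℝ^{p−1} be a node-wise Lasso solution with τ̂² := (1/n)‖X₁ − X₋₁γ̂‖² + λ‖γ̂‖₁ > 0, and set Θ̂₁ := (1/τ̂²)(1, −γ̂ᵀ)ᵀ ∈ ℝ^p, Σ̂ := XᵀX/n. Then ‖Σ̂Θ̂₁ − e₁‖_∞ ≤ λ/τ̂², and consequently, for any β̂, β₀ ∈ ℝ^p, |√n·(Σ̂Θ̂₁ − e₁)ᵀ(β₀ − β̂)| ≤ √n·(λ/τ̂²)·‖β̂ − β₀‖₁. -/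

import Mathlib

open MeasureTheory ProbabilityTheory Filter Finset Matrix Topology

noncomputable section

/-- Squared Euclidean norm of a vector in `ℝ^m`. -/
def sqNorm {m : ℕ} (v : Fin m → ℝ) : ℝ := ∑ i, (v i) ^ 2

/-- ℓ¹ norm of a vector in `ℝ^m`. -/
def l1Norm {m : ℕ} (v : Fin m → ℝ) : ℝ := ∑ i, |v i|

/-- ℓ^∞ norm (maximum absolute entry) of a vector in `ℝ^m`. -/
def supNorm {m : ℕ} (v : Fin m → ℝ) : ℝ := ⨆ i, |v i|

/-- First entry of a vector (0 if the vector is empty). -/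
def fstEntry {P : ℕ} (v : Fin P → ℝ) : ℝ := if h : 0 < P then v ⟨0, h⟩ else 0

/-- Index of the (j+2)-nd column, as an element of `Fin P`, for `j : Fin (P-1)`. -/
def colIdx {P : ℕ} (j : Fin (P - 1)) : Fin P := ⟨j.1 + 1, by have := j.isLt; omega⟩

/-- First column of the design matrix `X` (rows indexed by `Fin n`, columns by `Fin P`). -/
def col0 {n P : ℕ} (X : Fin n → Fin P → ℝ) : Fin n → ℝ := fun i => fstEntry (X i)

/-- Residual `X₁ - X₋₁ γ` of the node-wise regression of the first column on the others. -/
def nwRes {n P : ℕ} (X : Fin n → Fin P → ℝ) (g : Fin (P - 1) → ℝ) : Fin n → ℝ :=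
  fun i => col0 X i - ∑ j : Fin (P - 1), X i (colIdx j) * g j

/-- Node-wise Lasso objective `(1/n)‖X₁ - X₋₁γ‖² + 2λ‖γ‖₁`. -/
def nwObj {n P : ℕ} (X : Fin n → Fin P → ℝ) (lam : ℝ) (g : Fin (P - 1) → ℝ) : ℝ :=
  (1 / n) * sqNorm (nwRes X g) + 2 * lam * l1Norm g

/-- `g` is a node-wise Lasso solution with tuning parameter `lam`. -/
def IsNodewiseSol {n P : ℕ} (X : Fin n → Fin P → ℝ) (lam : ℝ) (g : Fin (P - 1) → ℝ) : Prop :=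
  ∀ γ : Fin (P - 1) → ℝ, nwObj X lam g ≤ nwObj X lam γ

/-- `τ̃² := (1/n)‖X₁ - X₋₁γ̂‖²`. -/
def tauTildeSq {n P : ℕ} (X : Fin n → Fin P → ℝ) (g : Fin (P - 1) → ℝ) : ℝ :=
  (1 / n) * sqNorm (nwRes X g)

/-- `τ̂² := τ̃² + λ‖γ̂‖₁`. -/
def tauHatSq {n P : ℕ} (X : Fin n → Fin P → ℝ) (lam : ℝ) (g : Fin (P - 1) → ℝ) : ℝ :=
  tauTildeSq X g + lam * l1Norm g

/-- `Θ̂₁ := (1/τ̂²)(1, -γ̂ᵀ)ᵀ ∈ ℝ^P`. -/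
def thetaHat {n P : ℕ} (X : Fin n → Fin P → ℝ) (lam : ℝ) (g : Fin (P - 1) → ℝ) :
    Fin P → ℝ :=
  fun j =>
    if h : j.1 = 0 then 1 / tauHatSq X lam g
    else -(g ⟨j.1 - 1, by have := j.isLt; omega⟩) / tauHatSq X lam g

/-- Sample covariance matrix `Σ̂ := XᵀX/n`. -/
def sigmaHat {n P : ℕ} (X : Fin n → Fin P → ℝ) : Fin P → Fin P → ℝ :=
  fun j k => (1 / n) * ∑ i, X i j * X i k

/-- The vector `Σ̂Θ̂₁ - e₁`. -/
def biasVec {n P : ℕ} (X : Fin n → Fin P → ℝ) (lam : ℝ) (g : Fin (P - 1) → ℝ) :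
    Fin P → ℝ :=
  fun j => (∑ k, sigmaHat X j k * thetaHat X lam g k) - (if j.1 = 0 then 1 else 0)

/-- `Ω̂₁,₁ := Θ̂₁ᵀ Σ̂ Θ̂₁`. -/
def omegaHat {n P : ℕ} (X : Fin n → Fin P → ℝ) (lam : ℝ) (g : Fin (P - 1) → ℝ) : ℝ :=
  ∑ j, ∑ k, thetaHat X lam g j * sigmaHat X j k * thetaHat X lam g k

/-- Bias factor `f(λ) := ‖Σ̂Θ̂₁ - e₁‖_∞ / Ω̂₁,₁^{1/2}`. -/
def biasFactor {n P : ℕ} (X : Fin n → Fin P → ℝ) (lam : ℝ) (g : Fin (P - 1) → ℝ) : ℝ :=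
  supNorm (biasVec X lam g) / Real.sqrt (omegaHat X lam g)

/-- Restricted maximum eigenvalue `φ_max(s)` of the sample covariance of `X`. -/
def phiMax {n P : ℕ} (X : Fin n → Fin P → ℝ) (s : ℕ) : ℝ :=
  sSup {r : ℝ | ∃ z : Fin P → ℝ, z ≠ 0 ∧ {j : Fin P | z j ≠ 0}.ncard ≤ s ∧
    r = sqNorm (fun i => ∑ j, X i j * z j) / (n * sqNorm z)}

/-- Restricted minimum eigenvalue `φ_min(s)` of the sample covariance of `X`. -/
def phiMin {n P : ℕ} (X : Fin n → Fin P → ℝ) (s : ℕ) : ℝ :=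
  sInf {r : ℝ | ∃ z : Fin P → ℝ, z ≠ 0 ∧ {j : Fin P | z j ≠ 0}.ncard ≤ s ∧
    r = sqNorm (fun i => ∑ j, X i j * z j) / (n * sqNorm z)}

/-- Restricted eigenvalue `κ(s,c₀)²` of Bickel–Ritov–Tsybakov. -/
def kappaSq {n P : ℕ} (X : Fin n → Fin P → ℝ) (s : ℕ) (c0 : ℝ) : ℝ :=
  sInf {r : ℝ | ∃ S : Finset (Fin P), S.card ≤ s ∧ ∃ z : Fin P → ℝ, z ≠ 0 ∧
    (∑ j ∈ Sᶜ, |z j|) ≤ c0 * ∑ j ∈ S, |z j| ∧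
    r = sqNorm (fun i => ∑ j, X i j * z j) / (n * ∑ j ∈ S, (z j) ^ 2)}

/-- The columns of `X` are in general position. -/
def InGeneralPosition {n P : ℕ} (X : Fin n → Fin P → ℝ) : Prop :=
  ∀ k : ℕ, k < min n P → ∀ ι : Fin (k + 1) → Fin P, Function.Injective ι →
    ∀ σ : Fin (k + 1) → ℝ, (∀ l, σ l = 1 ∨ σ l = -1) →
      ∀ i : Fin P, i ∉ Set.range ι → ∀ s : ℝ, s = 1 ∨ s = -1 →
        (s • fun r => X r i) ∉
          affineSpan ℝ (Set.range fun l => σ l • fun r => X r (ι l))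

/-- `b` is a Lasso solution for response `Y`, design `X`, tuning parameter `lam`. -/
def IsLassoSol {n P : ℕ} (X : Fin n → Fin P → ℝ) (Y : Fin n → ℝ) (lam : ℝ)
    (b : Fin P → ℝ) : Prop :=
  ∀ β : Fin P → ℝ,
    (1 / n) * sqNorm (fun i => Y i - ∑ j, X i j * b j) + 2 * lam * l1Norm b ≤
      (1 / n) * sqNorm (fun i => Y i - ∑ j, X i j * β j) + 2 * lam * l1Norm β

/-- The debiased Lasso `b̂₁ := β̂₁ + (1/n)Θ̂₁ᵀXᵀ(Y - Xβ̂)`. -/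
def debiasedLasso {n P : ℕ} (X : Fin n → Fin P → ℝ) (Y : Fin n → ℝ)
    (Theta : Fin P → ℝ) (bh : Fin P → ℝ) : ℝ :=
  fstEntry bh + (1 / n) * ∑ j, Theta j * ∑ i, X i j * (Y i - ∑ k, X i k * bh k)

/-- `W₁ := (1/√n)Θ̂₁ᵀXᵀε`. -/
def W1 {n P : ℕ} (X : Fin n → Fin P → ℝ) (Theta : Fin P → ℝ) (e : Fin n → ℝ) : ℝ :=
  (1 / Real.sqrt n) * ∑ j, Theta j * ∑ i, X i j * e i

/-- `Δ₁ := √n (Σ̂Θ̂₁ - e₁)ᵀ(β₀ - β̂)`. -/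
def Delta1 {n P : ℕ} (X : Fin n → Fin P → ℝ) (Theta : Fin P → ℝ)
    (b0 bh : Fin P → ℝ) : ℝ :=
  Real.sqrt n * ∑ j, ((∑ k, sigmaHat X j k * Theta k) - (if j.1 = 0 then 1 else 0)) *
    (b0 j - bh j)

/-- Standard normal cumulative distribution function. -/
def gaussCdf (z : ℝ) : ℝ := ((gaussianReal 0 1) (Set.Iic z)).toReal


lemma sum_split_aux {p : ℕ} (hp : 2 ≤ p) (f : Fin p → ℝ) :
    ∑ k, f k = f ⟨0, by omega⟩ + ∑ j : Fin (p - 1), f (colIdx j) := by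
  have h : p - 1 + 1 = p := by omega
  have he := Equiv.sum_comp (finCongr h) f
  rw [Fin.sum_univ_succ] at he
  rw [← he]
  exact congrArg₂ (· + ·) (congrArg f (Fin.ext (by simp)))
    (Finset.sum_congr rfl fun j _ => congrArg f (Fin.ext (by simp [colIdx])))

lemma kkt {n p : ℕ} (hn : 1 ≤ n) (X : Fin n → Fin p → ℝ) (lam : ℝ) (hlam : 0 < lam)
    (g : Fin (p - 1) → ℝ) (hsol : IsNodewiseSol X lam g) (j : Fin (p - 1)) :
    |∑ i, X i (colIdx j) * nwRes X g i| ≤ lam * n ∧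
    g j * (∑ i, X i (colIdx j) * nwRes X g i) = lam * (n : ℝ) * |g j| := by
  set a : ℝ := ∑ i, X i (colIdx j) * nwRes X g i with ha
  set c : ℝ := ∑ i, (X i (colIdx j)) ^ 2 with hcdef
  have hc : 0 ≤ c := Finset.sum_nonneg fun i _ => sq_nonneg _
  have hn0 : (0:ℝ) < n := by exact_mod_cast hn
  set γ : ℝ → (Fin (p - 1) → ℝ) := fun t m => g m + if m = j then t else 0 with hγ
  have hres : ∀ t i, nwRes X (γ t) i = nwRes X g i - t * X i (colIdx j) := by
    intro t i
    simp only [nwRes, hγ, mul_add, Finset.sum_add_distrib, mul_ite, mul_zero,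
      Finset.sum_ite_eq' Finset.univ j, Finset.mem_univ, if_true]
    ring
  have hsq : ∀ t, sqNorm (nwRes X (γ t))
      = sqNorm (nwRes X g) - 2 * t * a + t ^ 2 * c := by
    intro t
    have hpt : ∀ i, (nwRes X g i - t * X i (colIdx j)) ^ 2
        = nwRes X g i ^ 2 - 2 * t * (X i (colIdx j) * nwRes X g i)
          + t ^ 2 * (X i (colIdx j)) ^ 2 := fun i => by ring
    simp only [sqNorm, hres, hpt, Finset.sum_add_distrib, Finset.sum_sub_distrib,
      ← Finset.mul_sum]
    rw [ha, hcdef]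
  have hl1 : ∀ t, l1Norm (γ t) = l1Norm g - |g j| + |g j + t| := by
    intro t
    have hkey : l1Norm (γ t) - l1Norm g = |g j + t| - |g j| := by
      simp only [l1Norm, ← Finset.sum_sub_distrib]
      rw [Finset.sum_eq_single j]
      · simp [hγ]
      · intro m _ hm; simp [hγ, hm]
      · simp
    linarith
  have H : ∀ t : ℝ, 2 * t * a ≤ t ^ 2 * c + 2 * lam * (n:ℝ) * (|g j + t| - |g j|) := by
    intro t
    have h := hsol (γ t)
    simp only [nwObj, hsq, hl1] at h
    have h3 : (1 / (n:ℝ)) * (2 * t * a - t ^ 2 * c)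
        ≤ 2 * lam * (|g j + t| - |g j|) := by
      have hexp : (1 / (n:ℝ)) * (sqNorm (nwRes X g) - 2 * t * a + t ^ 2 * c)
          = (1 / (n:ℝ)) * sqNorm (nwRes X g)
            - (1 / (n:ℝ)) * (2 * t * a - t ^ 2 * c) := by ring
      rw [hexp] at h
      linarith
    have h4 := mul_le_mul_of_nonneg_left h3 hn0.le
    have hid : (n:ℝ) * ((1 / (n:ℝ)) * (2 * t * a - t ^ 2 * c))
        = 2 * t * a - t ^ 2 * c := by field_simp
    rw [hid] at h4
    nlinarith [h4]
  have habs : |a| ≤ lam * n := by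
    apply le_of_forall_pos_le_add
    intro ε hε
    have hc1 : (0:ℝ) < c + 1 := by linarith
    set s : ℝ := 2 * ε / (c + 1) with hs
    have hs0 : 0 < s := by positivity
    set t : ℝ := if 0 ≤ a then s else -s with ht
    have hta : t * a = s * |a| := by
      rcases le_or_gt 0 a with h | h
      · rw [ht, if_pos h, abs_of_nonneg h]
      · rw [ht, if_neg (not_le.mpr h), abs_of_neg h]; ring
    have htabs : |t| = s := by
      rcases le_or_gt 0 a with h | h
      · rw [ht, if_pos h, abs_of_pos hs0]
      · rw [ht, if_neg (not_le.mpr h), abs_neg, abs_of_pos hs0]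
    have ht2 : t ^ 2 = s ^ 2 := by rw [← sq_abs, htabs]
    have hΔ : |g j + t| - |g j| ≤ s := by
      have h1 := abs_sub_abs_le_abs_sub (g j + t) (g j)
      have h2 : |g j + t - g j| = s := by rw [add_sub_cancel_left, htabs]
      linarith
    have hH := H t
    have hsc : s * c ≤ 2 * ε := by
      rw [hs, div_mul_eq_mul_div, div_le_iff₀ hc1]
      nlinarith
    have hmul := mul_le_mul_of_nonneg_left hΔ
      (by positivity : (0:ℝ) ≤ 2 * lam * (n:ℝ))
    nlinarith [mul_le_mul_of_nonneg_left hsc hs0.le]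
  refine ⟨habs, ?_⟩
  have hge : lam * (n:ℝ) * |g j| ≤ g j * a := by
    apply le_of_forall_pos_le_add
    intro ε hε
    have hK1 : (0:ℝ) < (g j) ^ 2 * c + 1 := by positivity
    set s : ℝ := min 1 (2 * ε / ((g j) ^ 2 * c + 1)) with hs
    have hs0 : 0 < s := lt_min one_pos (by positivity)
    have hs1 : s ≤ 1 := min_le_left _ _
    have hΔ : |g j + -s * g j| - |g j| = -(s * |g j|) := by
      have h1 : g j + -s * g j = (1 - s) * g j := by ring
      rw [h1, abs_mul, abs_of_nonneg (by linarith : (0:ℝ) ≤ 1 - s)]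
      ring
    have hH := H (-s * g j)
    rw [hΔ] at hH
    have hsK : s * ((g j) ^ 2 * c) ≤ 2 * ε := by
      have h1 : s ≤ 2 * ε / ((g j) ^ 2 * c + 1) := min_le_right _ _
      have h2 : s * ((g j) ^ 2 * c + 1) ≤ 2 * ε := (le_div_iff₀ hK1).mp h1
      nlinarith
    nlinarith [hH, mul_le_mul_of_nonneg_left hsK hs0.le, hs0, hε, sq_nonneg (g j)]
  have hle : g j * a ≤ lam * (n:ℝ) * |g j| := by
    calc g j * a ≤ |g j * a| := le_abs_self _
      _ = |g j| * |a| := abs_mul _ _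
      _ ≤ |g j| * (lam * n) := mul_le_mul_of_nonneg_left habs (abs_nonneg _)
      _ = lam * (n:ℝ) * |g j| := by ring
  linarith


lemma hB_lemma {n p : ℕ} (hn : 1 ≤ n) (hp : 2 ≤ p)
    (X : Fin n → Fin p → ℝ) (lam : ℝ) (hlam : 0 < lam)
    (g : Fin (p - 1) → ℝ) (hsol : IsNodewiseSol X lam g) :
    ∑ i, X i ⟨0, by omega⟩ * nwRes X g i = (n : ℝ) * tauHatSq X lam g := by
  have h0p : 0 < p := by omega
  have hn0 : (0:ℝ) < n := by exact_mod_cast hn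
  have hx0 : ∀ i, X i ⟨0, h0p⟩ = nwRes X g i + ∑ m, X i (colIdx m) * g m := by
    intro i
    simp [nwRes, col0, fstEntry, h0p]
  calc ∑ i, X i ⟨0, h0p⟩ * nwRes X g i
      = ∑ i, ((nwRes X g i) ^ 2 + ∑ m, g m * (X i (colIdx m) * nwRes X g i)) := by
        refine Finset.sum_congr rfl fun i _ => ?_
        rw [hx0 i, add_mul, Finset.sum_mul]
        congr 1
        · ring
        · exact Finset.sum_congr rfl fun m _ => by ring
    _ = sqNorm (nwRes X g) + ∑ m, g m * ∑ i, X i (colIdx m) * nwRes X g i := by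
        rw [Finset.sum_add_distrib, Finset.sum_comm]
        congr 1
        exact Finset.sum_congr rfl fun m _ => by rw [Finset.mul_sum]
    _ = sqNorm (nwRes X g) + ∑ m, lam * (n:ℝ) * |g m| := by
        congr 1
        exact Finset.sum_congr rfl fun m _ => (kkt hn X lam hlam g hsol m).2
    _ = (n : ℝ) * tauHatSq X lam g := by
        rw [← Finset.mul_sum]
        have : (∑ m, |g m|) = l1Norm g := rfl
        rw [this, tauHatSq, tauTildeSq]
        field_simp


/-- `‖Σ̂Θ̂₁ − e₁‖_∞ ≤ λ/τ̂²` and the resulting Hölder bound on the bias. -/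
theorem statement9 (n p : ℕ) (hn : 1 ≤ n) (hp : 2 ≤ p)
    (X : Fin n → Fin p → ℝ) (lam : ℝ) (hlam : 0 < lam)
    (g : Fin (p - 1) → ℝ) (hsol : IsNodewiseSol X lam g)
    (hτ : 0 < tauHatSq X lam g) :
    supNorm (biasVec X lam g) ≤ lam / tauHatSq X lam g ∧
      ∀ bhat b0 : Fin p → ℝ,
        |Real.sqrt n * ∑ j, biasVec X lam g j * (b0 j - bhat j)| ≤
          Real.sqrt n * (lam / tauHatSq X lam g) * l1Norm (fun j => bhat j - b0 j) := by
  have h0p : 0 < p := by omega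
  have hn0 : (0:ℝ) < n := by exact_mod_cast hn
  set τ : ℝ := tauHatSq X lam g with hτdef
  have hτne : τ ≠ 0 := ne_of_gt hτ
  -- inner product of row i with thetaHat
  have hθsum : ∀ i, ∑ k, X i k * thetaHat X lam g k = nwRes X g i / τ := by
    intro i
    have hθ : ∀ k : Fin p, thetaHat X lam g k
        = (if h : k.1 = 0 then (1:ℝ) else -(g ⟨k.1 - 1, by have := k.isLt; omega⟩)) / τ := by
      intro k
      unfold thetaHat
      split_ifs <;> rfl
    have : ∀ k : Fin p, X i k * thetaHat X lam g k
        = (X i k * (if h : k.1 = 0 then (1:ℝ) else -(g ⟨k.1 - 1, by have := k.isLt; omega⟩))) / τ := by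
      intro k
      rw [hθ k, mul_div_assoc]
    rw [Finset.sum_congr rfl fun k _ => this k, ← Finset.sum_div]
    congr 1
    rw [sum_split_aux hp]
    have h1 : (X i ⟨0, by omega⟩ * (if h : (0:ℕ) = 0 then (1:ℝ) else
        -(g ⟨0 - 1, by omega⟩))) = X i ⟨0, by omega⟩ := by simp
    rw [h1]
    have h2 : ∀ m : Fin (p - 1),
        X i (colIdx m) * (if h : (colIdx m).1 = 0 then (1:ℝ)
          else -(g ⟨(colIdx m).1 - 1, by have := (colIdx m).isLt; omega⟩))
        = -(X i (colIdx m) * g m) := by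
      intro m
      rw [dif_neg (by simp [colIdx])]
      have : (⟨(colIdx m).1 - 1, by have := (colIdx m).isLt; omega⟩ : Fin (p-1)) = m :=
        Fin.ext (by simp [colIdx])
      rw [this]
      ring
    rw [Finset.sum_congr rfl fun m _ => h2 m, Finset.sum_neg_distrib]
    simp only [nwRes, col0, fstEntry, dif_pos h0p]
    ring
  have hSj : ∀ j : Fin p, ∑ k, sigmaHat X j k * thetaHat X lam g k
      = (1 / (n:ℝ)) * ((∑ i, X i j * nwRes X g i) / τ) := by
    intro j
    calc ∑ k, sigmaHat X j k * thetaHat X lam g k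
        = (1 / (n:ℝ)) * ∑ k, ∑ i, X i j * X i k * thetaHat X lam g k := by
          rw [Finset.mul_sum]
          refine Finset.sum_congr rfl fun k _ => ?_
          rw [sigmaHat, mul_assoc, Finset.sum_mul]
      _ = (1 / (n:ℝ)) * ∑ i, X i j * (∑ k, X i k * thetaHat X lam g k) := by
          rw [Finset.sum_comm]
          congr 1
          refine Finset.sum_congr rfl fun i _ => ?_
          rw [Finset.mul_sum]
          exact Finset.sum_congr rfl fun k _ => by ring
      _ = (1 / (n:ℝ)) * ((∑ i, X i j * nwRes X g i) / τ) := by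
          rw [Finset.sum_congr rfl fun i _ => by rw [hθsum i]]
          simp only [div_eq_mul_inv, ← mul_assoc, ← Finset.sum_mul]
  have hbnd : ∀ j : Fin p, |biasVec X lam g j| ≤ lam / τ := by
    intro j
    by_cases h0 : j.1 = 0
    · have hj : j = ⟨0, h0p⟩ := Fin.ext h0
      have : biasVec X lam g j = 0 := by
        rw [biasVec, hSj j, if_pos h0, hj, hB_lemma hn hp X lam hlam g hsol]
        field_simp
        rw [hτdef]; ring
      rw [this, abs_zero]
      exact div_nonneg hlam.le hτ.le
    · set m : Fin (p - 1) := ⟨j.1 - 1, by have := j.isLt; omega⟩ with hm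
      have hj : j = colIdx m := Fin.ext (by simp [colIdx, hm]; omega)
      have hkkt := (kkt hn X lam hlam g hsol m).1
      have : biasVec X lam g j
          = (1 / (n:ℝ)) * ((∑ i, X i (colIdx m) * nwRes X g i) / τ) := by
        rw [biasVec, hSj j, if_neg h0, hj]
        ring
      rw [this, abs_mul, abs_of_nonneg (by positivity : (0:ℝ) ≤ 1/(n:ℝ)), abs_div,
        abs_of_pos hτ, div_mul_div_comm, one_mul]
      rw [div_le_div_iff₀ (mul_pos hn0 hτ) hτ]
      nlinarith [hkkt, hτ, abs_nonneg (∑ i, X i (colIdx m) * nwRes X g i)]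
  haveI : Nonempty (Fin p) := ⟨⟨0, h0p⟩⟩
  have hsup : supNorm (biasVec X lam g) ≤ lam / τ := ciSup_le hbnd
  refine ⟨hsup, fun bhat b0 => ?_⟩
  have hterm : ∀ j, |biasVec X lam g j * (b0 j - bhat j)| ≤ (lam / τ) * |bhat j - b0 j| := by
    intro j
    rw [abs_mul, abs_sub_comm (b0 j) (bhat j)]
    exact mul_le_mul_of_nonneg_right (hbnd j) (abs_nonneg _)
  have hsum : |∑ j, biasVec X lam g j * (b0 j - bhat j)|
      ≤ (lam / τ) * l1Norm (fun j => bhat j - b0 j) := by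
    calc |∑ j, biasVec X lam g j * (b0 j - bhat j)|
        ≤ ∑ j, |biasVec X lam g j * (b0 j - bhat j)| := Finset.abs_sum_le_sum_abs _ _
      _ ≤ ∑ j, (lam / τ) * |bhat j - b0 j| := Finset.sum_le_sum fun j _ => hterm j
      _ = (lam / τ) * l1Norm (fun j => bhat j - b0 j) := by
          rw [l1Norm, Finset.mul_sum]
  rw [abs_mul, abs_of_nonneg (Real.sqrt_nonneg _), mul_assoc]
  exact mul_le_mul_of_nonneg_left hsum (Real.sqrt_nonneg _)


end
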